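/- Proposition 1 (subspace property of the optimal beamformer): for every power-feasible N-stream beamformer w = (w_1, …, w_N) (each w_n ∈ L²(μ; ℂ) and Σ_n ‖w_n‖²_{L²(μ)} ≤ P_max), the streamwise projection w∥ = (P_K w_1, …, P_K w_N) onto the closed linear span K of the conjugated channel sections is also power-feasible, each of its streams lies in K, and it achieves exactly the same spectral efficiency: SE(w∥) = SE(w), where SE(w) = log det(I_N + σ⁻² Q(w)). Consequently, the supremum of SE over all power-feasible beamformers equals the supremum of SE over power-feasible beamformers all of whose streams lie in K. -/

import Mathlib

open MeasureTheory ComplexConjugate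

noncomputable section

variable {α β : Type*} [MeasurableSpace α] [MeasurableSpace β]

/-- Effective received signal `e_w(r) = ∫_{S_B} h(r,s) w(s) dμ(s)`. -/
def eSig (h : β → α → ℂ) (μ : Measure α) (w : Lp ℂ 2 μ) (r : β) : ℂ :=
  ∫ s, h r s * (w : α → ℂ) s ∂μ

/-- The closed linear span `K` of the conjugated channel sections
`{s ↦ conj (h r s) : r ∈ S_U, h(r,·) ∈ L²(μ)}` in `L²(μ; ℂ)`. -/
def chanSub (h : β → α → ℂ) (μ : Measure α) : Submodule ℂ (Lp ℂ 2 μ) :=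
  (Submodule.span ℂ {f : Lp ℂ 2 μ |
    ∃ r : β, ∃ hr : MemLp (fun s => conj (h r s)) 2 μ,
      f = hr.toLp (fun s => conj (h r s))}).topologicalClosure

instance (h : β → α → ℂ) (μ : Measure α) : CompleteSpace (chanSub h μ) :=
  (Submodule.isClosed_topologicalClosure _).completeSpace_coe

/-- The orthogonal projection `P_K` of `L²(μ; ℂ)` onto the channel subspace `K`. -/
def projK (h : β → α → ℂ) (μ : Measure α) (w : Lp ℂ 2 μ) : Lp ℂ 2 μ :=
  (Submodule.orthogonalProjectionOnto (chanSub h μ) w : Lp ℂ 2 μ)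

/-- Signal covariance matrix `Q(w)_{mn} = ∫ conj(e_{w_m}(r)) ⬝ e_{w_n}(r) dν(r)`. -/
def covQ (h : β → α → ℂ) (μ : Measure α) (ν : Measure β) {N : ℕ}
    (w : Fin N → Lp ℂ 2 μ) : Matrix (Fin N) (Fin N) ℂ :=
  Matrix.of fun m n => ∫ r, conj (eSig h μ (w m) r) * eSig h μ (w n) r ∂ν

/-- Spectral efficiency `SE(w) = log det(I_N + σ⁻² Q(w))`; since `Q(w)` is Hermitian
positive semidefinite, the determinant is a real number (`≥ 1`), so we take its real
part and apply `Real.log`. -/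
def SE (h : β → α → ℂ) (μ : Measure α) (ν : Measure β) (σ2 : ℝ) {N : ℕ}
    (w : Fin N → Lp ℂ 2 μ) : ℝ :=
  Real.log ((1 + (σ2⁻¹ : ℂ) • covQ h μ ν w).det.re)


private lemma ae_memLp_conj_section (μ : Measure α) (ν : Measure β)
    [SigmaFinite μ] [SigmaFinite ν] (h : β → α → ℂ)
    (hmeas : Measurable (Function.uncurry h))
    (hL2 : MemLp (Function.uncurry h) 2 (ν.prod μ)) :
    ∀ᵐ r ∂ν, MemLp (fun s => conj (h r s)) 2 μ := by
  have hint : Integrable (fun p : β × α => ‖Function.uncurry h p‖ ^ 2) (ν.prod μ) :=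
    (memLp_two_iff_integrable_sq_norm hL2.aestronglyMeasurable).mp hL2
  filter_upwards [hint.prod_right_ae] with r hr
  have hm : AEStronglyMeasurable (fun s => conj (h r s)) μ :=
    (Complex.continuous_conj.comp_aestronglyMeasurable
      (hmeas.comp measurable_prodMk_left).aestronglyMeasurable)
  refine (memLp_two_iff_integrable_sq_norm hm).mpr ?_
  simpa [Function.uncurry] using hr

private lemma inner_toLp_eq_eSig (h : β → α → ℂ) (μ : Measure α) (r : β)
    (hr : MemLp (fun s => conj (h r s)) 2 μ) (v : Lp ℂ 2 μ) :
    (inner (𝕜 := ℂ) (hr.toLp (fun s => conj (h r s))) v) = eSig h μ v r := by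
  rw [MeasureTheory.L2.inner_def]
  refine integral_congr_ae ?_
  filter_upwards [hr.coeFn_toLp] with s hs
  simp [hs, RCLike.inner_apply, mul_comm]

private lemma eSig_projK_eq (h : β → α → ℂ) (μ : Measure α) (r : β)
    (hr : MemLp (fun s => conj (h r s)) 2 μ) (v : Lp ℂ 2 μ) :
    eSig h μ (projK h μ v) r = eSig h μ v r := by
  rw [← inner_toLp_eq_eSig h μ r hr, ← inner_toLp_eq_eSig h μ r hr]
  have hg : hr.toLp (fun s => conj (h r s)) ∈ chanSub h μ :=
    Submodule.le_topologicalClosure _ (Submodule.subset_span ⟨r, hr, rfl⟩)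
  have ho : v - ((chanSub h μ).orthogonalProjectionOnto v : Lp ℂ 2 μ) ∈ (chanSub h μ)ᗮ :=
    Submodule.sub_starProjection_mem_orthogonal (K := chanSub h μ) v
  have hz := (Submodule.mem_orthogonal _ _).mp ho _ hg
  rw [inner_sub_right] at hz
  unfold projK
  linear_combination -hz

private lemma norm_projK_le (h : β → α → ℂ) (μ : Measure α) (v : Lp ℂ 2 μ) :
    ‖projK h μ v‖ ≤ ‖v‖ := by
  rw [projK, Submodule.norm_coe]
  calc ‖Submodule.orthogonalProjectionOnto (chanSub h μ) v‖
      ≤ ‖Submodule.orthogonalProjectionOnto (chanSub h μ)‖ * ‖v‖ := ContinuousLinearMap.le_opNorm _ _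
  _ ≤ 1 * ‖v‖ := mul_le_mul_of_nonneg_right (Submodule.orthogonalProjectionOnto_norm_le _) (norm_nonneg v)
  _ = ‖v‖ := one_mul _

/-- **Proposition 1, subspace property of the optimal beamformer.**
For every power-feasible `N`-stream beamformer `w` (each `w_n ∈ L²(μ; ℂ)` and
`Σ_n ‖w_n‖² ≤ P_max`), the streamwise projection `w∥ = (P_K w_1, …, P_K w_N)` onto the
closed linear span `K` of the conjugated channel sections is also power-feasible, each of
its streams lies in `K`, and it achieves exactly the same spectral efficiency:
`SE(w∥) = SE(w)`. Consequently, the supremum of `SE` over all power-feasible beamformers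
equals the supremum of `SE` over power-feasible beamformers all of whose streams lie
in `K`. -/
theorem optimal_beamformer_subspace_property
    (μ : Measure α) (ν : Measure β) [SigmaFinite μ] [SigmaFinite ν]
    (h : β → α → ℂ)
    (hmeas : Measurable (Function.uncurry h))
    (hL2 : MemLp (Function.uncurry h) 2 (ν.prod μ))
    (σ2 : ℝ) (hσ2 : 0 < σ2) (Pmax : ℝ) (hPmax : 0 < Pmax) (N : ℕ) :
    (∀ w : Fin N → Lp ℂ 2 μ, (∑ n, ‖w n‖ ^ 2 ≤ Pmax) →
      (∑ n, ‖projK h μ (w n)‖ ^ 2 ≤ Pmax) ∧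
      (∀ n, projK h μ (w n) ∈ chanSub h μ) ∧
      SE h μ ν σ2 (fun n => projK h μ (w n)) = SE h μ ν σ2 w) ∧
    sSup {x : ℝ | ∃ w : Fin N → Lp ℂ 2 μ,
        (∑ n, ‖w n‖ ^ 2 ≤ Pmax) ∧ x = SE h μ ν σ2 w} =
      sSup {x : ℝ | ∃ w : Fin N → Lp ℂ 2 μ,
        (∑ n, ‖w n‖ ^ 2 ≤ Pmax) ∧ (∀ n, w n ∈ chanSub h μ) ∧ x = SE h μ ν σ2 w} := by
  have hK := ae_memLp_conj_section μ ν h hmeas hL2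
  have hcov : ∀ w : Fin N → Lp ℂ 2 μ,
      covQ h μ ν (fun n => projK h μ (w n)) = covQ h μ ν w := by
    intro w
    ext m n
    simp only [covQ, Matrix.of_apply]
    refine integral_congr_ae ?_
    filter_upwards [hK] with r hr
    rw [eSig_projK_eq h μ r hr, eSig_projK_eq h μ r hr]
  have hSE : ∀ w : Fin N → Lp ℂ 2 μ,
      SE h μ ν σ2 (fun n => projK h μ (w n)) = SE h μ ν σ2 w := by
    intro w; unfold SE; rw [hcov]
  have hpow : ∀ w : Fin N → Lp ℂ 2 μ, (∑ n, ‖w n‖ ^ 2 ≤ Pmax) →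
      ∑ n, ‖projK h μ (w n)‖ ^ 2 ≤ Pmax := by
    intro w hw
    refine le_trans (Finset.sum_le_sum fun n _ => ?_) hw
    exact pow_le_pow_left₀ (norm_nonneg _) (norm_projK_le h μ (w n)) 2
  have hmem : ∀ (w : Fin N → Lp ℂ 2 μ) (n : Fin N), projK h μ (w n) ∈ chanSub h μ :=
    fun w n => (Submodule.orthogonalProjectionOnto (chanSub h μ) (w n)).2
  constructor
  · exact fun w hw => ⟨hpow w hw, hmem w, hSE w⟩
  · congr 1
    ext x
    constructor
    · rintro ⟨w, hw, rfl⟩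
      exact ⟨fun n => projK h μ (w n), hpow w hw, hmem w, (hSE w).symm⟩
    · rintro ⟨w, hw, -, rfl⟩
      exact ⟨w, hw, rfl⟩


end
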